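/- Policy gradient identity: let θ ↦ P_θ and θ ↦ Q_θ be smooth families of positive Markovian kernels on finite E, μ_θ the stationary distribution of P_θ (smooth in θ), R_θ(x,y) := -ln(P_θ(y|x)/Q_θ(y|x)), and r(θ) := Σ_{x,y} μ_θ(x)P_θ(y|x)R_θ(x,y). Suppose V : E → ℝ satisfies the Bellman equation V(x) = Σ_y P_θ(y|x)[V(y)+R_θ(x,y)-r(θ)] for all x. Then ∇_θ r(θ) = Σ_{x,y} μ_θ(x)P_θ(y|x)[ (V(y)-V(x)+R_θ(x,y)-r(θ)) ∇_θ ln P_θ(y|x) + ∇_θ ln Q_θ(y|x) ]. -/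

import Mathlib

lemma stmt9_key {E : Type*} [Fintype E]
    (a m V : E → ℝ) (b c p q : E → E → ℝ) (ρ : ℝ)
    (hA : ∀ x, ∑ y, p x y = 0)
    (hB : ∑ x, m x = 0)
    (hC : ∀ y, ∑ x, (a x * p x y + b x y * m x) = m y)
    (hD : ∀ x, ∑ y, b x y * c x y = V x - (∑ y, b x y * V y) + ρ) :
    ∑ x, ∑ y, (b x y * c x y * m x + a x * c x y * p x y + a x * b x y * q x y - a x * p x y)
      = ∑ x, ∑ y, (a x * V y * p x y - a x * V x * p x y + a x * c x y * p x y
          - a x * ρ * p x y + a x * b x y * q x y) := by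
  have hS2 : ∑ x, ∑ y, a x * p x y = 0 := by
    simp [← Finset.mul_sum, hA]
  have hS4 : ∑ x, ∑ y, a x * V x * p x y = 0 := by
    simp [← Finset.mul_sum, hA, mul_assoc]
  have hS5 : ∑ x, ∑ y, a x * ρ * p x y = 0 := by
    simp [← Finset.mul_sum, hA, mul_assoc]
  have hmain : ∑ x, ∑ y, b x y * c x y * m x = ∑ x, ∑ y, a x * V y * p x y := by
    have hL : ∑ x, ∑ y, b x y * c x y * m x
        = ∑ x, m x * V x - ∑ x, ∑ y, V y * (b x y * m x) + ρ * ∑ x, m x := by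
      have : ∀ x, ∑ y, b x y * c x y * m x
          = m x * V x - ∑ y, V y * (b x y * m x) + ρ * m x := by
        intro x
        have h1 : ∑ y, b x y * c x y * m x = (∑ y, b x y * c x y) * m x := by
          rw [Finset.sum_mul]
        rw [h1, hD x, add_mul, sub_mul, Finset.sum_mul]
        have h2 : ∑ y, b x y * V y * m x = ∑ y, V y * (b x y * m x) :=
          Finset.sum_congr rfl fun y _ => by ring
        rw [h2]; ring
      rw [Finset.sum_congr rfl fun x _ => this x]
      rw [Finset.sum_add_distrib, Finset.sum_sub_distrib, ← Finset.mul_sum]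
    have hR : ∑ x, ∑ y, a x * V y * p x y
        = ∑ y, V y * m y - ∑ y, ∑ x, V y * (b x y * m x) := by
      rw [Finset.sum_comm]
      have : ∀ y, ∑ x, a x * V y * p x y = V y * m y - ∑ x, V y * (b x y * m x) := by
        intro y
        have h1 : ∑ x, a x * V y * p x y = V y * ∑ x, a x * p x y := by
          rw [Finset.mul_sum]; exact Finset.sum_congr rfl fun x _ => by ring
        have h2 : ∑ x, a x * p x y = m y - ∑ x, b x y * m x := by
          have := hC y
          rw [Finset.sum_add_distrib] at this
          linarith
        rw [h1, h2, mul_sub, Finset.mul_sum]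
      rw [Finset.sum_congr rfl fun y _ => this y, Finset.sum_sub_distrib]
    rw [hL, hR, hB, Finset.sum_comm (f := fun x y => V y * (b x y * m x))]
    have : ∑ x, m x * V x = ∑ y, V y * m y := Finset.sum_congr rfl fun x _ => by ring
    rw [this]; ring
  simp only [Finset.sum_add_distrib, Finset.sum_sub_distrib]
  rw [hS2, hS4, hS5, hmain]
  ring




/-- policy gradient identity: let `θ ↦ P_θ` and `θ ↦ Q_θ` be smooth
families of strictly positive Markov kernels on finite `E`, `μ_θ` the (smooth in `θ`)
stationary distribution of `P_θ`, `R_θ(x,y) := -ln(P_θ(y|x)/Q_θ(y|x))`, and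
`r(θ) := Σ_{x,y} μ_θ(x)P_θ(y|x)R_θ(x,y)`. If `V : E → ℝ` satisfies the Bellman
equation `V(x) = Σ_y P_θ(y|x)[V(y)+R_θ(x,y)-r(θ)]` at the given `θ`, then
`∇_θ r(θ) = Σ_{x,y} μ_θ(x)P_θ(y|x)[(V(y)-V(x)+R_θ(x,y)-r(θ)) ∇_θ ln P_θ(y|x)
  + ∇_θ ln Q_θ(y|x)]`. -/
theorem stmt9 {E : Type*} [Fintype E] [Nonempty E] {d : ℕ}
    (P Q : EuclideanSpace ℝ (Fin d) → E → E → ℝ)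
    (hPpos : ∀ θ x y, 0 < P θ x y) (hPstoch : ∀ θ x, ∑ y, P θ x y = 1)
    (hQpos : ∀ θ x y, 0 < Q θ x y) (hQstoch : ∀ θ x, ∑ y, Q θ x y = 1)
    (hPdiff : ∀ x y, Differentiable ℝ fun θ => P θ x y)
    (hQdiff : ∀ x y, Differentiable ℝ fun θ => Q θ x y)
    (μ : EuclideanSpace ℝ (Fin d) → E → ℝ)
    (hμ0 : ∀ θ x, 0 < μ θ x) (hμ1 : ∀ θ, ∑ x, μ θ x = 1)
    (hμstat : ∀ θ y, ∑ x, μ θ x * P θ x y = μ θ y)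
    (hμuniq : ∀ θ (ν : E → ℝ), (∀ x, 0 ≤ ν x) → ∑ x, ν x = 1 →
      (∀ y, ∑ x, ν x * P θ x y = ν y) → ν = μ θ)
    (hμdiff : ∀ x, Differentiable ℝ fun θ => μ θ x)
    (R : EuclideanSpace ℝ (Fin d) → E → E → ℝ)
    (hR : ∀ θ x y, R θ x y = -Real.log (P θ x y / Q θ x y))
    (r : EuclideanSpace ℝ (Fin d) → ℝ)
    (hr : ∀ θ, r θ = ∑ x, ∑ y, μ θ x * P θ x y * R θ x y)
    (θ : EuclideanSpace ℝ (Fin d))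
    (V : E → ℝ)
    (hV : ∀ x, V x = ∑ y, P θ x y * (V y + R θ x y - r θ)) :
    fderiv ℝ r θ
      = ∑ x, ∑ y, (μ θ x * P θ x y) •
          ((V y - V x + R θ x y - r θ) • fderiv ℝ (fun θ' => Real.log (P θ' x y)) θ
            + fderiv ℝ (fun θ' => Real.log (Q θ' x y)) θ) := by
  classical
  set Lp : E → E → (EuclideanSpace ℝ (Fin d) →L[ℝ] ℝ) :=
    fun x y => fderiv ℝ (fun θ' => P θ' x y) θ with hLpdef
  set Lq : E → E → (EuclideanSpace ℝ (Fin d) →L[ℝ] ℝ) :=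
    fun x y => fderiv ℝ (fun θ' => Q θ' x y) θ with hLqdef
  set Lm : E → (EuclideanSpace ℝ (Fin d) →L[ℝ] ℝ) :=
    fun x => fderiv ℝ (fun θ' => μ θ' x) θ with hLmdef
  have hPd : ∀ x y, HasFDerivAt (fun θ' => P θ' x y) (Lp x y) θ :=
    fun x y => ((hPdiff x y) θ).hasFDerivAt
  have hQd : ∀ x y, HasFDerivAt (fun θ' => Q θ' x y) (Lq x y) θ :=
    fun x y => ((hQdiff x y) θ).hasFDerivAt
  have hμd : ∀ x, HasFDerivAt (fun θ' => μ θ' x) (Lm x) θ :=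
    fun x => ((hμdiff x) θ).hasFDerivAt
  have hlogP : ∀ x y, HasFDerivAt (fun θ' => Real.log (P θ' x y))
      ((P θ x y)⁻¹ • Lp x y) θ := fun x y => (hPd x y).log (hPpos θ x y).ne'
  have hlogQ : ∀ x y, HasFDerivAt (fun θ' => Real.log (Q θ' x y))
      ((Q θ x y)⁻¹ • Lq x y) θ := fun x y => (hQd x y).log (hQpos θ x y).ne'
  have hRfun : ∀ x y, (fun θ' => R θ' x y)
      = fun θ' => Real.log (Q θ' x y) - Real.log (P θ' x y) := by
    intro x y
    funext θ'
    rw [hR, Real.log_div (hPpos θ' x y).ne' (hQpos θ' x y).ne']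
    ring
  have hRd : ∀ x y, HasFDerivAt (fun θ' => R θ' x y)
      ((Q θ x y)⁻¹ • Lq x y - (P θ x y)⁻¹ • Lp x y) θ := by
    intro x y
    rw [hRfun x y]
    exact (hlogQ x y).sub (hlogP x y)
  -- derivative of r
  have hterm : ∀ x y, HasFDerivAt (fun θ' => μ θ' x * P θ' x y * R θ' x y)
      ((μ θ x * P θ x y) • ((Q θ x y)⁻¹ • Lq x y - (P θ x y)⁻¹ • Lp x y)
        + R θ x y • (μ θ x • Lp x y + P θ x y • Lm x)) θ :=
    fun x y => ((hμd x).mul (hPd x y)).mul (hRd x y)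
  have hrd : HasFDerivAt r (∑ x, ∑ y,
      ((μ θ x * P θ x y) • ((Q θ x y)⁻¹ • Lq x y - (P θ x y)⁻¹ • Lp x y)
        + R θ x y • (μ θ x • Lp x y + P θ x y • Lm x))) θ := by
    have hfun : r = fun θ' => ∑ x, ∑ y, μ θ' x * P θ' x y * R θ' x y := funext hr
    rw [hfun]
    exact HasFDerivAt.fun_sum fun x _ => HasFDerivAt.fun_sum fun y _ => hterm x y
  -- identity (A)
  have hA : ∀ x, (∑ y, Lp x y) = 0 := by
    intro x
    have h1 : HasFDerivAt (fun θ' => ∑ y, P θ' x y) (∑ y, Lp x y) θ :=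
      HasFDerivAt.fun_sum fun y _ => hPd x y
    have h2 : (fun θ' => ∑ y, P θ' x y) = fun _ => (1 : ℝ) :=
      funext fun θ' => hPstoch θ' x
    rw [h2] at h1
    exact h1.unique (hasFDerivAt_const 1 θ)
  -- identity (B)
  have hB : (∑ x, Lm x) = 0 := by
    have h1 : HasFDerivAt (fun θ' => ∑ x, μ θ' x) (∑ x, Lm x) θ :=
      HasFDerivAt.fun_sum fun x _ => hμd x
    have h2 : (fun θ' => ∑ x, μ θ' x) = fun _ => (1 : ℝ) :=
      funext fun θ' => hμ1 θ'
    rw [h2] at h1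
    exact h1.unique (hasFDerivAt_const 1 θ)
  -- identity (C): differentiated stationarity
  have hC : ∀ y, (∑ x, (μ θ x • Lp x y + P θ x y • Lm x)) = Lm y := by
    intro y
    have h1 : HasFDerivAt (fun θ' => ∑ x, μ θ' x * P θ' x y)
        (∑ x, (μ θ x • Lp x y + P θ x y • Lm x)) θ :=
      HasFDerivAt.fun_sum fun x _ => (hμd x).mul (hPd x y)
    have h2 : (fun θ' => ∑ x, μ θ' x * P θ' x y) = fun θ' => μ θ' y :=
      funext fun θ' => hμstat θ' y
    rw [h2] at h1
    exact h1.unique (hμd y)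
  -- identity (D): Bellman rearranged
  have hD : ∀ x, ∑ y, P θ x y * R θ x y
      = V x - (∑ y, P θ x y * V y) + r θ := by
    intro x
    have h : ∑ y, P θ x y * (V y + R θ x y - r θ)
        = (∑ y, P θ x y * V y) + (∑ y, P θ x y * R θ x y) - r θ := by
      simp only [mul_add, mul_sub, Finset.sum_add_distrib, Finset.sum_sub_distrib,
        ← Finset.sum_mul, hPstoch, one_mul]
    have := hV x
    rw [h] at this
    linarith
  -- rewrite the goal
  rw [hrd.fderiv]
  have hgoalr : ∀ x y, (μ θ x * P θ x y) •
          ((V y - V x + R θ x y - r θ) • fderiv ℝ (fun θ' => Real.log (P θ' x y)) θ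
            + fderiv ℝ (fun θ' => Real.log (Q θ' x y)) θ)
      = (μ θ x * P θ x y) •
          ((V y - V x + R θ x y - r θ) • ((P θ x y)⁻¹ • Lp x y)
            + (Q θ x y)⁻¹ • Lq x y) := by
    intro x y
    rw [(hlogP x y).fderiv, (hlogQ x y).fderiv]
  simp only [hgoalr]
  -- now a pure linear-algebra identity; check on each vector
  ext v
  simp only [ContinuousLinearMap.sum_apply, ContinuousLinearMap.add_apply,
    ContinuousLinearMap.sub_apply, ContinuousLinearMap.smul_apply, smul_eq_mul]
  -- abbreviations for the scalar quantities
  set p : E → E → ℝ := fun x y => Lp x y v with hpdef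
  set qv : E → E → ℝ := fun x y => (Q θ x y)⁻¹ * Lq x y v with hqdef
  set m : E → ℝ := fun x => Lm x v with hmdef
  have hA' : ∀ x, ∑ y, p x y = 0 := by
    intro x
    have := congrArg (fun L : EuclideanSpace ℝ (Fin d) →L[ℝ] ℝ => L v) (hA x)
    simpa [ContinuousLinearMap.sum_apply] using this
  have hB' : ∑ x, m x = 0 := by
    have := congrArg (fun L : EuclideanSpace ℝ (Fin d) →L[ℝ] ℝ => L v) hB
    simpa [ContinuousLinearMap.sum_apply] using this
  have hC' : ∀ y, ∑ x, (μ θ x * p x y + P θ x y * m x) = m y := by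
    intro y
    have := congrArg (fun L : EuclideanSpace ℝ (Fin d) →L[ℝ] ℝ => L v) (hC y)
    simpa [ContinuousLinearMap.sum_apply, ContinuousLinearMap.add_apply,
      ContinuousLinearMap.smul_apply, smul_eq_mul] using this
  have hL : ∀ x y, μ θ x * P θ x y * ((Q θ x y)⁻¹ * (Lq x y) v - (P θ x y)⁻¹ * p x y)
        + R θ x y * (μ θ x * p x y + P θ x y * m x)
      = P θ x y * R θ x y * m x + μ θ x * R θ x y * p x y
        + μ θ x * P θ x y * qv x y - μ θ x * p x y := by
    intro x y
    have hb : P θ x y ≠ 0 := (hPpos θ x y).ne'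
    field_simp [hqdef]
    ring
  have hRt : ∀ x y, μ θ x * P θ x y *
        ((V y - V x + R θ x y - r θ) * ((P θ x y)⁻¹ * p x y) + (Q θ x y)⁻¹ * (Lq x y) v)
      = μ θ x * V y * p x y - μ θ x * V x * p x y + μ θ x * R θ x y * p x y
        - μ θ x * r θ * p x y + μ θ x * P θ x y * qv x y := by
    intro x y
    have hb : P θ x y ≠ 0 := (hPpos θ x y).ne'
    field_simp [hqdef]
    ring
  calc ∑ x, ∑ y, (μ θ x * P θ x y * ((Q θ x y)⁻¹ * (Lq x y) v - (P θ x y)⁻¹ * p x y)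
        + R θ x y * (μ θ x * p x y + P θ x y * m x))
      = ∑ x, ∑ y, (P θ x y * R θ x y * m x + μ θ x * R θ x y * p x y
          + μ θ x * P θ x y * qv x y - μ θ x * p x y) :=
        Finset.sum_congr rfl fun x _ => Finset.sum_congr rfl fun y _ => hL x y
    _ = ∑ x, ∑ y, (μ θ x * V y * p x y - μ θ x * V x * p x y + μ θ x * R θ x y * p x y
          - μ θ x * r θ * p x y + μ θ x * P θ x y * qv x y) :=
        stmt9_key (μ θ) m V (P θ) (R θ) p qv (r θ) hA' hB' hC' hD
    _ = ∑ x, ∑ y, μ θ x * P θ x y *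
          ((V y - V x + R θ x y - r θ) * ((P θ x y)⁻¹ * p x y) + (Q θ x y)⁻¹ * (Lq x y) v) :=
        (Finset.sum_congr rfl fun x _ => Finset.sum_congr rfl fun y _ => (hRt x y).symm)
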